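/- Optimality of the counting test among diagonal tests (key inequality of Theorem 5.1): let N > 0, R₀ ≥ 0, α ∈ (0,1), and define P_{r}(k) = (1/(N+1))(N/(N+1))^k e^{−r²/(N+1)} L_k(−r²/(N(N+1))). Let k₀ ∈ ℕ and γ ∈ (0,1] be chosen so that γ P_{R₀}(k₀) + Σ_{k>k₀} P_{R₀}(k) = α. Then for any sequence (t_k) with t_k ∈ [0,1] and Σ_k t_k P_{R₀}(k) ≤ α, and any r > R₀, we have Σ_k t_k P_r(k) ≤ γ P_r(k₀) + Σ_{k>k₀} P_r(k). -/

import Mathlib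

/-- The k-th Laguerre polynomial. -/
noncomputable def laguerre (k : ℕ) (x : ℝ) : ℝ :=
  ∑ j ∈ Finset.range (k + 1), (k.choose j : ℝ) * (-x) ^ j / (j.factorial : ℝ)

/-- Number-measurement outcome distribution on the quantum Gaussian state with
|mean| = r and number parameter N. -/
noncomputable def Pr (N r : ℝ) (k : ℕ) : ℝ :=
  (1 / (N + 1)) * (N / (N + 1)) ^ k * Real.exp (-r ^ 2 / (N + 1)) *
    laguerre k (-r ^ 2 / (N * (N + 1)))

open Finset

/-- laguerre at a nonpositive argument, extended summation range. -/
lemma laguerre_neg_eq (k : ℕ) (x : ℝ) {n : ℕ} (hn : k + 1 ≤ n) :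
    laguerre k (-x) = ∑ j ∈ Finset.range n, ((k.choose j : ℝ) / (j.factorial : ℝ)) * x ^ j := by
  unfold laguerre
  rw [Finset.sum_subset (Finset.range_subset_range.2 hn)]
  · apply Finset.sum_congr rfl
    intro j _
    rw [neg_neg]; ring
  · intro j _ hj'
    simp only [Finset.mem_range, not_lt] at hj'
    rw [Nat.choose_eq_zero_of_lt (by omega)]
    simp

lemma one_le_laguerre_neg {x : ℝ} (hx : 0 ≤ x) (k : ℕ) : 1 ≤ laguerre k (-x) := by
  rw [laguerre_neg_eq k x (le_refl (k + 1))]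
  have h0 : ((k.choose 0 : ℝ) / (Nat.factorial 0 : ℝ)) * x ^ 0 = 1 := by simp
  calc (1 : ℝ) = ((k.choose 0 : ℝ) / (Nat.factorial 0 : ℝ)) * x ^ 0 := h0.symm
    _ ≤ ∑ j ∈ Finset.range (k + 1), ((k.choose j : ℝ) / (j.factorial : ℝ)) * x ^ j := by
        apply Finset.single_le_sum (f := fun j => ((k.choose j : ℝ) / (j.factorial : ℝ)) * x ^ j)
        · intro j _; positivity
        · exact Finset.mem_range.2 (by omega)

lemma laguerre_neg_pos {x : ℝ} (hx : 0 ≤ x) (k : ℕ) : 0 < laguerre k (-x) :=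
  lt_of_lt_of_le one_pos (one_le_laguerre_neg hx k)

lemma pow_mul_pow_le_pow_mul_pow {x y : ℝ} (hy : 0 ≤ y) (hxy : y ≤ x) {i j : ℕ} (h : j ≤ i) :
    x ^ j * y ^ i ≤ x ^ i * y ^ j := by
  obtain ⟨d, rfl⟩ : ∃ d, i = j + d := ⟨i - j, by omega⟩
  have hx : 0 ≤ x := hy.trans hxy
  have hd : y ^ d ≤ x ^ d := pow_le_pow_left₀ hy hxy d
  calc x ^ j * y ^ (j + d) = (x ^ j * y ^ j) * y ^ d := by rw [pow_add]; ring
    _ ≤ (x ^ j * y ^ j) * x ^ d := by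
        apply mul_le_mul_of_nonneg_left hd (by positivity)
    _ = x ^ (j + d) * y ^ j := by rw [pow_add]; ring

/-- Chebyshev-type rearrangement inequality for polynomials with nonnegative coefficients
satisfying a cross-ratio monotonicity condition. -/
lemma cheb (n : ℕ) (a b : ℕ → ℝ)
    (hab : ∀ i j, j ≤ i → a j * b i ≤ a i * b j)
    {x y : ℝ} (hy : 0 ≤ y) (hxy : y ≤ x) :
    (∑ j ∈ Finset.range n, a j * y ^ j) * (∑ j ∈ Finset.range n, b j * x ^ j) ≤
      (∑ j ∈ Finset.range n, a j * x ^ j) * (∑ j ∈ Finset.range n, b j * y ^ j) := by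
  have h1 : ∀ i j : ℕ, 0 ≤ (a i * b j - a j * b i) * (x ^ i * y ^ j - x ^ j * y ^ i) := by
    intro i j
    rcases le_total j i with h | h
    · exact mul_nonneg (sub_nonneg.2 (hab i j h))
        (sub_nonneg.2 (pow_mul_pow_le_pow_mul_pow hy hxy h))
    · have : (a i * b j - a j * b i) * (x ^ i * y ^ j - x ^ j * y ^ i) =
          (a j * b i - a i * b j) * (x ^ j * y ^ i - x ^ i * y ^ j) := by ring
      rw [this]
      exact mul_nonneg (sub_nonneg.2 (hab j i h))
        (sub_nonneg.2 (pow_mul_pow_le_pow_mul_pow hy hxy h))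
  have h2 : 0 ≤ ∑ i ∈ Finset.range n, ∑ j ∈ Finset.range n,
      (a i * b j - a j * b i) * (x ^ i * y ^ j - x ^ j * y ^ i) :=
    Finset.sum_nonneg fun i _ => Finset.sum_nonneg fun j _ => h1 i j
  have h3 : ∑ i ∈ Finset.range n, ∑ j ∈ Finset.range n,
      (a i * b j - a j * b i) * (x ^ i * y ^ j - x ^ j * y ^ i) =
      2 * ((∑ j ∈ Finset.range n, a j * x ^ j) * (∑ j ∈ Finset.range n, b j * y ^ j) -
        (∑ j ∈ Finset.range n, a j * y ^ j) * (∑ j ∈ Finset.range n, b j * x ^ j)) := by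
    have expand : ∀ i j : ℕ, (a i * b j - a j * b i) * (x ^ i * y ^ j - x ^ j * y ^ i) =
        (a i * x ^ i) * (b j * y ^ j) - (a i * y ^ i) * (b j * x ^ j)
          - (b i * x ^ i) * (a j * y ^ j) + (b i * y ^ i) * (a j * x ^ j) := by
      intro i j; ring
    simp_rw [expand, Finset.sum_add_distrib, Finset.sum_sub_distrib,
      ← Finset.mul_sum, ← Finset.sum_mul]
    ring
  linarith [h2, h3 ▸ h2]

lemma choose_cross {k i j : ℕ} (h : j ≤ i) :
    (k + 1).choose j * k.choose i ≤ (k + 1).choose i * k.choose j := by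
  have hi := Nat.choose_mul_succ_eq k i
  have hj := Nat.choose_mul_succ_eq k j
  have key : (k + 1).choose j * k.choose i * (k + 1) ≤ (k + 1).choose i * k.choose j * (k + 1) := by
    calc (k + 1).choose j * k.choose i * (k + 1) = (k + 1).choose j * (k.choose i * (k + 1)) := by
          ring
      _ = (k + 1).choose j * ((k + 1).choose i * (k + 1 - i)) := by rw [hi]
      _ = (k + 1).choose i * (k + 1).choose j * (k + 1 - i) := by ring
      _ ≤ (k + 1).choose i * (k + 1).choose j * (k + 1 - j) :=
          Nat.mul_le_mul_left _ (Nat.sub_le_sub_left h _)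
      _ = (k + 1).choose i * ((k + 1).choose j * (k + 1 - j)) := by ring
      _ = (k + 1).choose i * (k.choose j * (k + 1)) := by rw [hj]
      _ = (k + 1).choose i * k.choose j * (k + 1) := by ring
  exact Nat.le_of_mul_le_mul_right key (Nat.succ_pos k)

lemma laguerre_step {x y : ℝ} (hy : 0 ≤ y) (hxy : y ≤ x) (k : ℕ) :
    laguerre (k + 1) (-y) * laguerre k (-x) ≤ laguerre (k + 1) (-x) * laguerre k (-y) := by
  rw [laguerre_neg_eq k x (by omega : k + 1 ≤ k + 2),
    laguerre_neg_eq k y (by omega : k + 1 ≤ k + 2),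
    laguerre_neg_eq (k + 1) x (le_refl (k + 2)), laguerre_neg_eq (k + 1) y (le_refl (k + 2))]
  apply cheb (k + 2) (fun j => ((k + 1).choose j : ℝ) / (j.factorial : ℝ))
    (fun j => (k.choose j : ℝ) / (j.factorial : ℝ)) _ hy hxy
  intro i j hji
  have hcross : ((k + 1).choose j * k.choose i : ℝ) ≤ ((k + 1).choose i * k.choose j : ℝ) := by
    exact_mod_cast choose_cross hji
  have hfi : (0 : ℝ) < (i.factorial : ℝ) := by exact_mod_cast i.factorial_pos
  have hfj : (0 : ℝ) < (j.factorial : ℝ) := by exact_mod_cast j.factorial_pos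
  rw [div_mul_div_comm, div_mul_div_comm, div_le_div_iff₀ (by positivity) (by positivity)]
  calc ((k + 1).choose j : ℝ) * (k.choose i : ℝ) * ((i.factorial : ℝ) * (j.factorial : ℝ))
      ≤ ((k + 1).choose i : ℝ) * (k.choose j : ℝ) * ((i.factorial : ℝ) * (j.factorial : ℝ)) := by
        apply mul_le_mul_of_nonneg_right (by push_cast at hcross ⊢; linarith) (by positivity)
    _ = ((k + 1).choose i : ℝ) * (k.choose j : ℝ) * ((j.factorial : ℝ) * (i.factorial : ℝ)) := by
        ring

lemma laguerre_mlr {x y : ℝ} (hy : 0 ≤ y) (hxy : y ≤ x) {k₀ k : ℕ} (hk : k₀ ≤ k) :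
    laguerre k (-y) * laguerre k₀ (-x) ≤ laguerre k (-x) * laguerre k₀ (-y) := by
  have hx : 0 ≤ x := hy.trans hxy
  induction k, hk using Nat.le_induction with
  | base => exact le_of_eq (mul_comm _ _)
  | succ k hk ih =>
    have step := laguerre_step hy hxy k
    have p1 := laguerre_neg_pos hy k
    have p2 := laguerre_neg_pos hx k
    have p3 := laguerre_neg_pos hy k₀
    have p4 := laguerre_neg_pos hx k₀
    have p5 := laguerre_neg_pos hy (k + 1)
    have p6 := laguerre_neg_pos hx (k + 1)
    apply le_of_mul_le_mul_right _ p1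
    have A := mul_le_mul_of_nonneg_right ih p5.le
    have B := mul_le_mul_of_nonneg_right step p3.le
    nlinarith [A, B]

lemma Pr_pos {N : ℝ} (hN : 0 < N) (r : ℝ) (k : ℕ) : 0 < Pr N r k := by
  unfold Pr
  have h1 : (0 : ℝ) < N + 1 := by linarith
  have harg : -r ^ 2 / (N * (N + 1)) = -(r ^ 2 / (N * (N + 1))) := by rw [neg_div]
  rw [harg]
  have := laguerre_neg_pos (x := r ^ 2 / (N * (N + 1))) (by positivity) k
  positivity

lemma Pr_mlr {N : ℝ} (hN : 0 < N) {s r : ℝ} (hs : 0 ≤ s) (hsr : s ≤ r) {k₀ k : ℕ}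
    (hk : k₀ ≤ k) : Pr N r k₀ * Pr N s k ≤ Pr N r k * Pr N s k₀ := by
  have h1 : (0 : ℝ) < N + 1 := by linarith
  have hargr : -r ^ 2 / (N * (N + 1)) = -(r ^ 2 / (N * (N + 1))) := by rw [neg_div]
  have hargs : -s ^ 2 / (N * (N + 1)) = -(s ^ 2 / (N * (N + 1))) := by rw [neg_div]
  have hyx : s ^ 2 / (N * (N + 1)) ≤ r ^ 2 / (N * (N + 1))  := by
    apply div_le_div_of_nonneg_right _ (by positivity)
    · exact pow_le_pow_left₀ hs hsr 2
  have hy : (0 : ℝ) ≤ s ^ 2 / (N * (N + 1)) := by positivity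
  have key := laguerre_mlr hy hyx hk
  unfold Pr
  rw [hargr, hargs]
  set Lrk := laguerre k (-(r ^ 2 / (N * (N + 1))))
  set Lrk₀ := laguerre k₀ (-(r ^ 2 / (N * (N + 1))))
  set Lsk := laguerre k (-(s ^ 2 / (N * (N + 1))))
  set Lsk₀ := laguerre k₀ (-(s ^ 2 / (N * (N + 1))))
  have hC : (0 : ℝ) ≤ (1 / (N + 1)) * (N / (N + 1)) ^ k₀ * Real.exp (-r ^ 2 / (N + 1)) *
      ((1 / (N + 1)) * (N / (N + 1)) ^ k * Real.exp (-s ^ 2 / (N + 1))) := by positivity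
  calc 1 / (N + 1) * (N / (N + 1)) ^ k₀ * Real.exp (-r ^ 2 / (N + 1)) * Lrk₀ *
        (1 / (N + 1) * (N / (N + 1)) ^ k * Real.exp (-s ^ 2 / (N + 1)) * Lsk)
      = (1 / (N + 1) * (N / (N + 1)) ^ k₀ * Real.exp (-r ^ 2 / (N + 1)) *
        (1 / (N + 1) * (N / (N + 1)) ^ k * Real.exp (-s ^ 2 / (N + 1)))) * (Lsk * Lrk₀) := by
        ring
    _ ≤ (1 / (N + 1) * (N / (N + 1)) ^ k₀ * Real.exp (-r ^ 2 / (N + 1)) *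
        (1 / (N + 1) * (N / (N + 1)) ^ k * Real.exp (-s ^ 2 / (N + 1)))) * (Lrk * Lsk₀) :=
        mul_le_mul_of_nonneg_left key hC
    _ = 1 / (N + 1) * (N / (N + 1)) ^ k * Real.exp (-r ^ 2 / (N + 1)) * Lrk *
        (1 / (N + 1) * (N / (N + 1)) ^ k₀ * Real.exp (-s ^ 2 / (N + 1)) * Lsk₀) := by ring

lemma laguerre_neg_le {x : ℝ} (hx : 0 ≤ x) (k : ℕ) :
    laguerre k (-x) ≤ Real.exp (2 * Real.sqrt (k * x)) := by
  rw [laguerre_neg_eq k x (le_refl (k + 1))]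
  set s := Real.sqrt (k * x) with hs
  have hs0 : 0 ≤ s := Real.sqrt_nonneg _
  have hterm : ∀ j ∈ Finset.range (k + 1),
      ((k.choose j : ℝ) / (j.factorial : ℝ)) * x ^ j ≤ (s ^ j / (j.factorial : ℝ)) ^ 2 := by
    intro j _
    have h1 : (k.choose j : ℝ) ≤ (k : ℝ) ^ j / (j.factorial : ℝ) := Nat.choose_le_pow_div j k
    have hfj : (0 : ℝ) < (j.factorial : ℝ) := by exact_mod_cast j.factorial_pos
    have h2 : (s ^ j) ^ 2 = ((k : ℝ) * x) ^ j := by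
      rw [← pow_mul, mul_comm j 2, pow_mul, Real.sq_sqrt (by positivity)]
    calc ((k.choose j : ℝ) / (j.factorial : ℝ)) * x ^ j
        ≤ ((k : ℝ) ^ j / (j.factorial : ℝ) / (j.factorial : ℝ)) * x ^ j := by
          apply mul_le_mul_of_nonneg_right _ (by positivity)
          exact div_le_div_of_nonneg_right h1 hfj.le
      _ = (s ^ j / (j.factorial : ℝ)) ^ 2 := by
          rw [div_pow, h2, mul_pow]; ring
  calc ∑ j ∈ Finset.range (k + 1), ((k.choose j : ℝ) / (j.factorial : ℝ)) * x ^ j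
      ≤ ∑ j ∈ Finset.range (k + 1), (s ^ j / (j.factorial : ℝ)) ^ 2 :=
        Finset.sum_le_sum hterm
    _ ≤ (∑ j ∈ Finset.range (k + 1), s ^ j / (j.factorial : ℝ)) ^ 2 := by
        have hT : ∀ j ∈ Finset.range (k + 1), s ^ j / (j.factorial : ℝ) ≤
            ∑ i ∈ Finset.range (k + 1), s ^ i / (i.factorial : ℝ) := fun j hj =>
          Finset.single_le_sum (f := fun i => s ^ i / (i.factorial : ℝ))
            (fun i _ => by positivity) hj
        rw [sq]
        calc ∑ j ∈ Finset.range (k + 1), (s ^ j / (j.factorial : ℝ)) ^ 2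
            ≤ ∑ j ∈ Finset.range (k + 1), (s ^ j / (j.factorial : ℝ)) *
              (∑ i ∈ Finset.range (k + 1), s ^ i / (i.factorial : ℝ)) :=
              Finset.sum_le_sum (fun j hj => by
                rw [sq]; exact mul_le_mul_of_nonneg_left (hT j hj) (by positivity))
          _ = (∑ j ∈ Finset.range (k + 1), s ^ j / (j.factorial : ℝ)) *
              ∑ i ∈ Finset.range (k + 1), s ^ i / (i.factorial : ℝ) := by
              rw [← Finset.sum_mul]
    _ ≤ (Real.exp s) ^ 2 := by
        apply pow_le_pow_left₀ _ (Real.sum_le_exp_of_nonneg hs0 (k + 1)) 2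
        apply Finset.sum_nonneg; intro j _; positivity
    _ = Real.exp (2 * Real.sqrt (k * x)) := by
        rw [sq, ← Real.exp_add, hs]; congr 1; ring

lemma Pr_summable {N : ℝ} (hN : 0 < N) (r : ℝ) : Summable (Pr N r) := by
  have h1 : (0 : ℝ) < N + 1 := by linarith
  set q : ℝ := N / (N + 1) with hqdef
  have hq0 : 0 < q := by positivity
  have hq1 : q < 1 := by rw [hqdef, div_lt_one h1]; linarith
  set x : ℝ := r ^ 2 / (N * (N + 1)) with hxdef
  have hx : 0 ≤ x := by positivity
  set ε : ℝ := Real.log (1 / q) / 2 with hεdef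
  have hε : 0 < ε := by
    apply div_pos (Real.log_pos (one_lt_one_div hq0 hq1)) two_pos
  have hgeo : q * Real.exp ε < 1 := by
    have hsq : (q * Real.exp ε) ^ 2 = q := by
      rw [mul_pow, ← Real.exp_nat_mul]
      have : (2 : ℝ) * ε = Real.log (1 / q) := by rw [hεdef]; ring
      have h2 : Real.exp ((2 : ℕ) * ε) = 1 / q := by
        push_cast; rw [this, Real.exp_log (by positivity)]
      rw [h2]; field_simp
    nlinarith [mul_pos hq0 (Real.exp_pos ε)]
  -- pointwise bound
  have hbound : ∀ k : ℕ, Pr N r k ≤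
      (1 / (N + 1)) * Real.exp (-r ^ 2 / (N + 1)) * Real.exp (x / ε) * (q * Real.exp ε) ^ k := by
    intro k
    unfold Pr
    have harg : -r ^ 2 / (N * (N + 1)) = -x := by rw [hxdef, neg_div]
    rw [harg]
    have hL := laguerre_neg_le hx k
    have hamgm : 2 * Real.sqrt (k * x) ≤ ε * k + x / ε := by
      have h2 : Real.sqrt (ε * k) * Real.sqrt (x / ε) = Real.sqrt (k * x) := by
        rw [← Real.sqrt_mul (by positivity)]
        congr 1
        field_simp
      have h3 := two_mul_le_add_sq (Real.sqrt (ε * k)) (Real.sqrt (x / ε))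
      rw [Real.sq_sqrt (by positivity), Real.sq_sqrt (by positivity)] at h3
      calc 2 * Real.sqrt (k * x) = 2 * (Real.sqrt (ε * k) * Real.sqrt (x / ε)) := by rw [h2]
        _ = 2 * Real.sqrt (ε * k) * Real.sqrt (x / ε) := by ring
        _ ≤ ε * k + x / ε := h3
    have hL2 : laguerre k (-x) ≤ Real.exp (x / ε) * Real.exp ε ^ k := by
      calc laguerre k (-x) ≤ Real.exp (2 * Real.sqrt (k * x)) := hL
        _ ≤ Real.exp (ε * k + x / ε) := Real.exp_le_exp.2 hamgm
        _ = Real.exp (x / ε) * Real.exp ε ^ k := by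
            rw [← Real.exp_nat_mul, ← Real.exp_add]; ring_nf
    calc (1 / (N + 1)) * q ^ k * Real.exp (-r ^ 2 / (N + 1)) * laguerre k (-x)
        ≤ (1 / (N + 1)) * q ^ k * Real.exp (-r ^ 2 / (N + 1)) *
          (Real.exp (x / ε) * Real.exp ε ^ k) := by
          apply mul_le_mul_of_nonneg_left hL2 (by positivity)
      _ = (1 / (N + 1)) * Real.exp (-r ^ 2 / (N + 1)) * Real.exp (x / ε) *
          (q * Real.exp ε) ^ k := by rw [mul_pow]; ring
  apply Summable.of_nonneg_of_le (fun k => (Pr_pos hN r k).le) hbound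
  exact ((summable_geometric_of_lt_one (by positivity) hgeo).mul_left _)

lemma summable_coeff_mul {N : ℝ} (hN : 0 < N) (r : ℝ) {c : ℕ → ℝ} (hc0 : ∀ k, 0 ≤ c k)
    (hc1 : ∀ k, c k ≤ 1) : Summable (fun k => c k * Pr N r k) := by
  apply Summable.of_nonneg_of_le (fun k => mul_nonneg (hc0 k) (Pr_pos hN r k).le)
    (fun k => _) (Pr_summable hN r)
  intro k
  calc c k * Pr N r k ≤ 1 * Pr N r k :=
        mul_le_mul_of_nonneg_right (hc1 k) (Pr_pos hN r k).le
    _ = Pr N r k := one_mul _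

/-- Key inequality of Theorem 5.1: the threshold-with-randomization counting test
maximizes power at every alternative `r > R₀` among all level-α randomized tests
based on the counts. -/
theorem counting_test_optimal (N : ℝ) (hN : 0 < N) (R₀ : ℝ) (hR₀ : 0 ≤ R₀)
    (α : ℝ) (hα : α ∈ Set.Ioo (0:ℝ) 1) (k₀ : ℕ) (γ : ℝ) (hγ : γ ∈ Set.Ioc (0:ℝ) 1)
    (hlevel : γ * Pr N R₀ k₀ + ∑' k : ℕ, (if k₀ < k then Pr N R₀ k else 0) = α)
    (t : ℕ → ℝ) (ht : ∀ k, t k ∈ Set.Icc (0:ℝ) 1)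
    (htlevel : ∑' k : ℕ, t k * Pr N R₀ k ≤ α)
    (r : ℝ) (hr : R₀ < r) :
    ∑' k : ℕ, t k * Pr N r k ≤ γ * Pr N r k₀ + ∑' k : ℕ, (if k₀ < k then Pr N r k else 0) := by
  obtain ⟨hγ0, hγ1⟩ := hγ
  set φ : ℕ → ℝ := fun k => if k = k₀ then γ else if k₀ < k then 1 else 0 with hφdef
  have hφ0 : ∀ k, 0 ≤ φ k := by
    intro k; rw [hφdef]; dsimp only; split
    · exact hγ0.le
    · split
      · exact zero_le_one
      · exact le_refl 0
  have hφ1 : ∀ k, φ k ≤ 1 := by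
    intro k; rw [hφdef]; dsimp only; split
    · exact hγ1
    · split
      · exact le_refl 1
      · exact zero_le_one
  -- summability facts
  have hSφr : Summable (fun k => φ k * Pr N r k) := summable_coeff_mul hN r hφ0 hφ1
  have hSφ₀ : Summable (fun k => φ k * Pr N R₀ k) := summable_coeff_mul hN R₀ hφ0 hφ1
  have hStr : Summable (fun k => t k * Pr N r k) :=
    summable_coeff_mul hN r (fun k => (ht k).1) (fun k => (ht k).2)
  have hSt₀ : Summable (fun k => t k * Pr N R₀ k) :=
    summable_coeff_mul hN R₀ (fun k => (ht k).1) (fun k => (ht k).2)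
  -- decomposition of the tsum for φ
  have hdecomp : ∀ s : ℝ, ∑' k, φ k * Pr N s k =
      γ * Pr N s k₀ + ∑' k : ℕ, (if k₀ < k then Pr N s k else 0) := by
    intro s
    have hterm : ∀ k : ℕ, φ k * Pr N s k =
        (if k = k₀ then γ * Pr N s k₀ else 0) + (if k₀ < k then Pr N s k else 0) := by
      intro k
      rw [hφdef]; dsimp only
      rcases lt_trichotomy k k₀ with h | h | h
      · have h1 : ¬ k = k₀ := by omega
        have h2 : ¬ k₀ < k := by omega
        simp only [if_neg h1, if_neg h2]; ring
      · subst h; simp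
      · have h1 : ¬ k = k₀ := by omega
        simp only [if_neg h1, if_pos h]; ring
    have hs1 : Summable (fun k : ℕ => if k = k₀ then γ * Pr N s k₀ else 0) := by
      apply summable_of_ne_finset_zero (s := {k₀})
      intro k hk
      rw [if_neg (by simpa using hk)]
    have hs2 : Summable (fun k : ℕ => if k₀ < k then Pr N s k else 0) := by
      apply Summable.of_nonneg_of_le _ _ (Pr_summable hN s)
      · intro k; split
        · exact (Pr_pos hN s k).le
        · exact le_refl 0
      · intro k; split
        · exact le_refl _
        · exact (Pr_pos hN s k).le
    calc ∑' k, φ k * Pr N s k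
        = ∑' k : ℕ, ((if k = k₀ then γ * Pr N s k₀ else 0) + (if k₀ < k then Pr N s k else 0)) :=
          tsum_congr hterm
      _ = (∑' k : ℕ, if k = k₀ then γ * Pr N s k₀ else 0) +
          ∑' k : ℕ, (if k₀ < k then Pr N s k else 0) := Summable.tsum_add hs1 hs2
      _ = γ * Pr N s k₀ + ∑' k : ℕ, (if k₀ < k then Pr N s k else 0) := by
          rw [tsum_ite_eq]
  -- pointwise inequality
  have hpoint : ∀ k : ℕ,
      0 ≤ (φ k - t k) * (Pr N r k * Pr N R₀ k₀ - Pr N r k₀ * Pr N R₀ k) := by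
    intro k
    rcases lt_trichotomy k k₀ with h | h | h
    · have hφk : φ k = 0 := by rw [hφdef]; dsimp only; rw [if_neg (by omega), if_neg (by omega)]
      have h1 : φ k - t k ≤ 0 := by rw [hφk]; linarith [(ht k).1]
      have h2 : Pr N r k * Pr N R₀ k₀ - Pr N r k₀ * Pr N R₀ k ≤ 0 := by
        have := Pr_mlr hN hR₀ hr.le (le_of_lt h)
        linarith
      nlinarith [mul_nonneg (neg_nonneg.2 h1) (neg_nonneg.2 h2)]
    · subst h
      have : Pr N r k * Pr N R₀ k - Pr N r k * Pr N R₀ k = 0 := sub_self _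
      rw [this, mul_zero]
    · have hφk : φ k = 1 := by rw [hφdef]; dsimp only; rw [if_neg (by omega), if_pos h]
      have h1 : 0 ≤ φ k - t k := by rw [hφk]; linarith [(ht k).2]
      have h2 : 0 ≤ Pr N r k * Pr N R₀ k₀ - Pr N r k₀ * Pr N R₀ k := by
        have := Pr_mlr hN hR₀ hr.le (le_of_lt h)
        linarith
      exact mul_nonneg h1 h2
  have hA : 0 < Pr N R₀ k₀ := Pr_pos hN R₀ k₀
  have hB : 0 < Pr N r k₀ := Pr_pos hN r k₀
  -- sum the pointwise inequality
  have hkey : 0 ≤ ∑' k, (φ k - t k) * (Pr N r k * Pr N R₀ k₀ - Pr N r k₀ * Pr N R₀ k) :=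
    tsum_nonneg hpoint
  have hexpand : ∑' k, (φ k - t k) * (Pr N r k * Pr N R₀ k₀ - Pr N r k₀ * Pr N R₀ k) =
      ((∑' k, φ k * Pr N r k) - ∑' k, t k * Pr N r k) * Pr N R₀ k₀ -
        ((∑' k, φ k * Pr N R₀ k) - ∑' k, t k * Pr N R₀ k) * Pr N r k₀ := by
    have hterm : ∀ k : ℕ, (φ k - t k) * (Pr N r k * Pr N R₀ k₀ - Pr N r k₀ * Pr N R₀ k) =
        (φ k * Pr N r k * Pr N R₀ k₀ - t k * Pr N r k * Pr N R₀ k₀) -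
          (φ k * Pr N R₀ k * Pr N r k₀ - t k * Pr N R₀ k * Pr N r k₀) := by
      intro k; ring
    rw [tsum_congr hterm,
      Summable.tsum_sub ((hSφr.mul_right _).sub (hStr.mul_right _))
        ((hSφ₀.mul_right _).sub (hSt₀.mul_right _)),
      Summable.tsum_sub (hSφr.mul_right _) (hStr.mul_right _),
      Summable.tsum_sub (hSφ₀.mul_right _) (hSt₀.mul_right _),
      tsum_mul_right, tsum_mul_right, tsum_mul_right, tsum_mul_right]
    ring
  have hφ₀val : ∑' k, φ k * Pr N R₀ k = α := by rw [hdecomp R₀]; exact hlevel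
  have hmid : 0 ≤ ((∑' k, φ k * Pr N R₀ k) - ∑' k, t k * Pr N R₀ k) := by
    rw [hφ₀val]; linarith
  rw [hexpand] at hkey
  have hfinal : ∑' k, t k * Pr N r k ≤ ∑' k, φ k * Pr N r k := by
    nlinarith [mul_nonneg hmid hB.le]
  calc ∑' k, t k * Pr N r k ≤ ∑' k, φ k * Pr N r k := hfinal
    _ = γ * Pr N r k₀ + ∑' k : ℕ, (if k₀ < k then Pr N r k else 0) := hdecomp r
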